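/- Define polynomials A_n(x) by A_0(x)=1 and A_{n+1}(x) = A_n'(x) + (x+1)·A_n(x). Then as formal power series, Σ_{k≥0} N(n+k;(k)) x^k = A_n(x)/(1−x), where N(n+k;(k)) = Σ_{j=0}^{min(n,k)} C(n,j)·t_{n−j}. -/

import Mathlib

open Finset

/-- `invol n` = number of involutions in the symmetric group `S_n` (permutations `σ` with `σ² = 1`). -/
noncomputable def invol (n : ℕ) : ℕ := Nat.card {σ : Equiv.Perm (Fin n) // σ * σ = 1}

/-- `skewSYT lam alp` = the number `f^{λ/α}` of standard Young tableaux of skew shape `λ/α`,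
encoded as saturated chains of Young diagrams from `α` to `λ` adding one cell at a time
(zero if `α ⊄ λ`). -/
noncomputable def skewSYT (lam alp : YoungDiagram) : ℕ :=
  Nat.card {f : Fin (lam.card - alp.card + 1) → YoungDiagram //
    f 0 = alp ∧ f (Fin.last _) = lam ∧
    ∀ i : Fin (lam.card - alp.card),
      f i.castSucc ≤ f i.succ ∧ (f i.succ).card = (f i.castSucc).card + 1}

/-- `NN n α = N(n;α) = Σ_{λ ⊢ n} f^{λ/α}`. -/
noncomputable def NN (n : ℕ) (alp : YoungDiagram) : ℕ :=
  ∑ᶠ lam ∈ {μ : YoungDiagram | μ.card = n}, skewSYT lam alp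

/-- the single-row Young diagram with `k` cells -/
def rowYD (k : ℕ) : YoungDiagram := YoungDiagram.ofRowLens [k] (List.pairwise_singleton _ k).sortedGE

/-- the polynomials `A_n`: `A_0 = 1`, `A_{n+1} = A_n' + (x+1)·A_n` -/
noncomputable def Apoly : ℕ → Polynomial ℚ
  | 0 => 1
  | n + 1 => Polynomial.derivative (Apoly n) + (Polynomial.X + 1) * Apoly n


namespace YD11
open YoungDiagram

/-- rows where a cell can be added -/
def aRows (μ : YoungDiagram) : Finset ℕ :=
  (range (μ.colLen 0 + 1)).filter fun i => i = 0 ∨ μ.rowLen i < μ.rowLen (i-1)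

/-- rows where a cell can be removed -/
def rRows (μ : YoungDiagram) : Finset ℕ :=
  (range (μ.colLen 0)).filter fun i => μ.rowLen (i+1) < μ.rowLen i

lemma rowLen_pos_iff {μ : YoungDiagram} {i : ℕ} : 0 < μ.rowLen i ↔ i < μ.colLen 0 := by
  rw [← mem_iff_lt_rowLen, ← mem_iff_lt_colLen]

lemma aRows_eq (μ : YoungDiagram) : aRows μ = insert 0 ((rRows μ).image (· + 1)) := by
  ext i
  simp only [aRows, rRows, mem_insert, Finset.mem_image, Finset.mem_filter, Finset.mem_range]
  constructor
  · rintro ⟨hir, h0 | hlt⟩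
    · exact Or.inl h0
    · rcases Nat.eq_zero_or_pos i with h0 | hpos
      · exact Or.inl h0
      refine Or.inr ⟨i - 1, ⟨?_, ?_⟩, by omega⟩
      · rw [← rowLen_pos_iff]; omega
      · have : i - 1 + 1 = i := by omega
        rw [this]; omega
    
  · rintro (h0 | ⟨j, ⟨hj, hlt⟩, rfl⟩)
    · subst h0; exact ⟨Nat.succ_pos _, Or.inl rfl⟩
    · exact ⟨by omega, Or.inr (by simpa using hlt)⟩

lemma card_aRows (μ : YoungDiagram) : (aRows μ).card = (rRows μ).card + 1 := by
  rw [aRows_eq, Finset.card_insert_of_notMem (by simp), Finset.card_image_of_injective _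
    (fun a b h => by omega)]

end YD11

namespace YD11
open YoungDiagram

noncomputable instance : DecidableEq YoungDiagram := Classical.decEq _

def addCell (μ : YoungDiagram) (i : ℕ) (h : i = 0 ∨ μ.rowLen i < μ.rowLen (i-1)) :
    YoungDiagram where
  cells := insert (i, μ.rowLen i) μ.cells
  isLowerSet := by
    intro c d hle hc
    simp only [Finset.coe_insert, Set.mem_insert_iff, Finset.mem_coe, mem_cells] at hc ⊢
    obtain ⟨hd1, hd2⟩ := hle
    rcases hc with hcc | hcc
    · subst hcc
      simp only at hd1 hd2
      rcases eq_or_lt_of_le hd2 with h2 | h2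
      · rcases eq_or_lt_of_le hd1 with h1 | h1
        · left; exact Prod.ext h1 h2
        · right
          rw [mem_iff_lt_rowLen, h2]
          rcases h with h0 | h
          · omega
          · calc μ.rowLen i < μ.rowLen (i-1) := h
              _ ≤ μ.rowLen d.1 := μ.rowLen_anti _ _ (by omega)
      · right; rw [mem_iff_lt_rowLen]
        calc d.2 < μ.rowLen i := h2
          _ ≤ μ.rowLen d.1 := μ.rowLen_anti _ _ hd1
    · right; exact μ.isLowerSet ⟨hd1, hd2⟩ hcc

@[simp] lemma mem_addCell {μ : YoungDiagram} {i : ℕ} {h} {c : ℕ × ℕ} :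
    c ∈ addCell μ i h ↔ c = (i, μ.rowLen i) ∨ c ∈ μ := by
  show c ∈ insert (i, μ.rowLen i) μ.cells ↔ _
  simp [addCell]

lemma corner_not_mem (μ : YoungDiagram) (i : ℕ) : (i, μ.rowLen i) ∉ μ := by
  rw [mem_iff_lt_rowLen]; omega

lemma card_addCell (μ : YoungDiagram) (i : ℕ) (h) :
    (addCell μ i h).card = μ.card + 1 := by
  show (insert (i, μ.rowLen i) μ.cells).card = μ.cells.card + 1
  rw [Finset.card_insert_of_notMem (by simpa using corner_not_mem μ i)]

lemma le_addCell (μ : YoungDiagram) (i : ℕ) (h) : μ ≤ addCell μ i h :=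
  fun c hc => mem_addCell.mpr (Or.inr hc)

noncomputable def covers (μ : YoungDiagram) : Finset YoungDiagram :=
  (aRows μ).attach.image fun i =>
    addCell μ i.1 (by have := i.2; simp only [aRows, Finset.mem_filter] at this; exact this.2)

lemma mem_covers {μ ν : YoungDiagram} :
    ν ∈ covers μ ↔ μ ≤ ν ∧ ν.card = μ.card + 1 := by
  constructor
  · intro hν
    simp only [covers, Finset.mem_image, Finset.mem_attach, true_and, Subtype.exists] at hν
    obtain ⟨i, hi, rfl⟩ := hν
    exact ⟨le_addCell _ _ _, card_addCell _ _ _⟩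
  · rintro ⟨hle, hcard⟩
    have hcard' : ν.cells.card = μ.cells.card + 1 := hcard
    have hsub : μ.cells ⊆ ν.cells := hle
    have hsd : (ν.cells \ μ.cells).card = 1 := by
      rw [Finset.card_sdiff_of_subset hsub]; omega
    obtain ⟨c, hc⟩ := Finset.card_eq_one.mp hsd
    obtain ⟨i, j⟩ := c
    have hcmem : (i, j) ∈ ν ∧ (i, j) ∉ μ := by
      have : (i,j) ∈ ν.cells \ μ.cells := hc ▸ Finset.mem_singleton_self _
      simpa using this
    have hcells : ν.cells = insert (i, j) μ.cells := by
      apply Finset.eq_of_subset_of_card_le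
      · intro x hx
        by_cases hxμ : x ∈ μ.cells
        · exact Finset.mem_insert_of_mem hxμ
        · have : x ∈ ν.cells \ μ.cells := Finset.mem_sdiff.mpr ⟨hx, hxμ⟩
          rw [hc, Finset.mem_singleton] at this
          exact this ▸ Finset.mem_insert_self _ _
      · rw [Finset.card_insert_of_notMem hcmem.2]; omega
    have hmemν : ∀ a b : ℕ, a ≤ i → b ≤ j → (a, b) ≠ (i, j) → (a, b) ∈ μ := by
      intro a b ha hb hne
      have h1 : (a, b) ∈ ν := ν.up_left_mem ha hb hcmem.1
      have h2 : (a, b) ∈ ν.cells := h1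
      rw [hcells, Finset.mem_insert] at h2
      rcases h2 with h | h
      · exact absurd h hne
      · exact h
    have hj : j = μ.rowLen i := by
      rcases Nat.lt_trichotomy j (μ.rowLen i) with h | h | h
      · exact absurd (mem_iff_lt_rowLen.mpr h) hcmem.2
      · exact h
      · have := hmemν i (μ.rowLen i) le_rfl (by omega) (by simp; omega)
        exact absurd this (corner_not_mem μ i)
    subst hj
    have haddable : i = 0 ∨ μ.rowLen i < μ.rowLen (i-1) := by
      rcases Nat.eq_zero_or_pos i with h0 | hpos
      · exact Or.inl h0
      · right
        have : (i - 1, μ.rowLen i) ∈ μ := hmemν (i-1) (μ.rowLen i) (by omega) le_rfl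
          (by simp; omega)
        rw [mem_iff_lt_rowLen] at this
        exact this
    have hrange : i ∈ aRows μ := by
      simp only [aRows, Finset.mem_filter, Finset.mem_range]
      refine ⟨?_, haddable⟩
      rcases Nat.eq_zero_or_pos i with h0 | hpos
      · omega
      · have h1 : 0 < μ.rowLen (i-1) := by omega
        rw [rowLen_pos_iff] at h1
        omega
    simp only [covers, Finset.mem_image, Finset.mem_attach, true_and, Subtype.exists]
    refine ⟨i, hrange, ?_⟩
    apply YoungDiagram.ext
    rw [hcells]
    rfl

end YD11

namespace YD11
open YoungDiagram

def delCell (μ : YoungDiagram) (i : ℕ) (h : μ.rowLen (i+1) < μ.rowLen i) : YoungDiagram where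
  cells := μ.cells.erase (i, μ.rowLen i - 1)
  isLowerSet := by
    intro c d hle hc
    simp only [Finset.coe_erase, Set.mem_diff, Finset.mem_coe, mem_cells,
      Set.mem_singleton_iff] at hc ⊢
    obtain ⟨hd1, hd2⟩ := hle
    obtain ⟨hcν, hcne⟩ := hc
    refine ⟨μ.isLowerSet ⟨hd1, hd2⟩ hcν, ?_⟩
    intro hdeq
    rw [hdeq] at hd1 hd2
    simp only at hd1 hd2
    apply hcne
    have hc1 : c.1 = i := by
      by_contra hne
      have hii : i + 1 ≤ c.1 := by omega
      have : (i + 1, c.2) ∈ μ := μ.up_left_mem hii le_rfl (show (c.1, c.2) ∈ μ from hcν)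
      rw [mem_iff_lt_rowLen] at this
      omega
    have hc2 : c.2 = μ.rowLen i - 1 := by
      have h2 : c.2 < μ.rowLen c.1 := mem_iff_lt_rowLen.mp (show (c.1, c.2) ∈ μ from hcν)
      rw [hc1] at h2
      omega
    exact Prod.ext hc1 hc2

@[simp] lemma mem_delCell {μ : YoungDiagram} {i : ℕ} {h} {c : ℕ × ℕ} :
    c ∈ delCell μ i h ↔ c ≠ (i, μ.rowLen i - 1) ∧ c ∈ μ := by
  show c ∈ μ.cells.erase (i, μ.rowLen i - 1) ↔ _
  simp [delCell, Finset.mem_erase]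

lemma precorner_mem (μ : YoungDiagram) (i : ℕ) (h : 0 < μ.rowLen i) :
    (i, μ.rowLen i - 1) ∈ μ := by
  rw [mem_iff_lt_rowLen]; omega

lemma card_delCell (μ : YoungDiagram) (i : ℕ) (h) :
    μ.card = (delCell μ i h).card + 1 := by
  show μ.cells.card = (μ.cells.erase (i, μ.rowLen i - 1)).card + 1
  rw [Finset.card_erase_of_mem (by simpa using precorner_mem μ i (by omega))]
  have : 0 < μ.cells.card := Finset.card_pos.mpr ⟨_, by simpa using precorner_mem μ i (by omega)⟩
  omega

lemma delCell_le (μ : YoungDiagram) (i : ℕ) (h) : delCell μ i h ≤ μ :=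
  fun c hc => (mem_delCell.mp hc).2

noncomputable def cocovs (μ : YoungDiagram) : Finset YoungDiagram :=
  (rRows μ).attach.image fun i =>
    delCell μ i.1 (by have := i.2; simp only [rRows, Finset.mem_filter] at this; exact this.2)

lemma mem_cocovs {μ ν : YoungDiagram} :
    ν ∈ cocovs μ ↔ ν ≤ μ ∧ μ.card = ν.card + 1 := by
  constructor
  · intro hν
    simp only [cocovs, Finset.mem_image, Finset.mem_attach, true_and, Subtype.exists] at hν
    obtain ⟨i, hi, rfl⟩ := hν
    exact ⟨delCell_le _ _ _, card_delCell _ _ _⟩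
  · rintro ⟨hle, hcard⟩
    have hcard' : μ.cells.card = ν.cells.card + 1 := hcard
    have hsub : ν.cells ⊆ μ.cells := hle
    have hsd : (μ.cells \ ν.cells).card = 1 := by
      rw [Finset.card_sdiff_of_subset hsub]; omega
    obtain ⟨c, hc⟩ := Finset.card_eq_one.mp hsd
    obtain ⟨i, j⟩ := c
    have hcmem : (i, j) ∈ μ ∧ (i, j) ∉ ν := by
      have : (i,j) ∈ μ.cells \ ν.cells := hc ▸ Finset.mem_singleton_self _
      simpa using this
    have hcells : ν.cells = μ.cells.erase (i, j) := by
      apply Finset.eq_of_subset_of_card_le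
      · intro x hx
        refine Finset.mem_erase.mpr ⟨?_, hsub hx⟩
        rintro rfl
        exact hcmem.2 hx
      · rw [Finset.card_erase_of_mem hcmem.1]; omega
    have hney : ∀ x : ℕ × ℕ, x ∈ μ → x ≠ (i, j) → x ∈ ν := by
      intro x hx hne
      have : x ∈ μ.cells.erase (i, j) := Finset.mem_erase.mpr ⟨hne, hx⟩
      rw [← hcells] at this
      exact this
    have hrl : 0 < μ.rowLen i := by
      have := mem_iff_lt_rowLen.mp hcmem.1; omega
    have hj : j = μ.rowLen i - 1 := by
      have hlt : j < μ.rowLen i := mem_iff_lt_rowLen.mp hcmem.1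
      by_contra hne
      have hj1 : (i, j + 1) ∈ μ := mem_iff_lt_rowLen.mpr (by omega)
      have h2 : (i, j + 1) ∈ ν := hney _ hj1 (by simp)
      have h3 : (i, j) ∈ ν := ν.up_left_mem le_rfl (by omega) h2
      exact hcmem.2 h3
    subst hj
    have hrem : μ.rowLen (i+1) < μ.rowLen i := by
      by_contra hge
      have h1 : (i + 1, μ.rowLen i - 1) ∈ μ := mem_iff_lt_rowLen.mpr (by omega)
      have h2 : (i + 1, μ.rowLen i - 1) ∈ ν := hney _ h1 (by simp)
      have h3 : (i, μ.rowLen i - 1) ∈ ν := ν.up_left_mem (by omega) le_rfl h2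
      exact hcmem.2 h3
    have hrange : i ∈ rRows μ := by
      simp only [rRows, Finset.mem_filter, Finset.mem_range]
      exact ⟨rowLen_pos_iff.mp hrl, hrem⟩
    simp only [cocovs, Finset.mem_image, Finset.mem_attach, true_and, Subtype.exists]
    refine ⟨i, hrange, ?_⟩
    apply YoungDiagram.ext
    rw [hcells]
    rfl

lemma mem_cocovs_iff_mem_covers {μ ν : YoungDiagram} : ν ∈ cocovs μ ↔ μ ∈ covers ν := by
  rw [mem_cocovs, mem_covers]

lemma addCell_inj {μ : YoungDiagram} {a b : ℕ} {h1 h2}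
    (heq : addCell μ a h1 = addCell μ b h2) : a = b := by
  by_contra hne
  have hmem : (a, μ.rowLen a) ∈ addCell μ a h1 := mem_addCell.mpr (Or.inl rfl)
  rw [heq] at hmem
  rcases mem_addCell.mp hmem with h | h
  · exact hne (congrArg Prod.fst h)
  · exact corner_not_mem μ a h

lemma delCell_inj {μ : YoungDiagram} {a b : ℕ} {h1 h2}
    (heq : delCell μ a h1 = delCell μ b h2) : a = b := by
  by_contra hne
  have hmem : (a, μ.rowLen a - 1) ∉ delCell μ a h1 := by simp
  rw [heq] at hmem
  apply hmem
  rw [mem_delCell]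
  constructor
  · intro h
    exact hne (congrArg Prod.fst h)
  · exact precorner_mem μ a (by omega)

lemma card_covers (μ : YoungDiagram) : (covers μ).card = (cocovs μ).card + 1 := by
  have h1 : (covers μ).card = (aRows μ).card := by
    rw [covers, Finset.card_image_of_injective, Finset.card_attach]
    intro x y h
    exact Subtype.ext (addCell_inj h)
  have h2 : (cocovs μ).card = (rRows μ).card := by
    rw [cocovs, Finset.card_image_of_injective, Finset.card_attach]
    intro x y h
    exact Subtype.ext (delCell_inj h)
  rw [h1, h2, card_aRows]

end YD11

namespace YD11
open YoungDiagram

lemma yd_eq_of_le_card {μ ν : YoungDiagram} (h : μ ≤ ν) (hc : ν.card ≤ μ.card) : μ = ν :=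
  YoungDiagram.ext (Finset.eq_of_subset_of_card_le (cells_subset_iff.mpr h) hc)

lemma card_sup_inf (μ lam : YoungDiagram) : (μ ⊔ lam).card + (μ ⊓ lam).card = μ.card + lam.card := by
  show (μ ⊔ lam).cells.card + (μ ⊓ lam).cells.card = μ.cells.card + lam.cells.card
  rw [cells_sup, cells_inf]
  exact Finset.card_union_add_card_inter _ _

/-- termwise commutation: `|covers μ ∩ covers λ| = |cocovs μ ∩ cocovs λ| + δ_{μλ}` -/
lemma diamond (μ lam : YoungDiagram) :
    (covers μ ∩ covers lam).card = (cocovs μ ∩ cocovs lam).card + (if lam = μ then 1 else 0) := by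
  rcases eq_or_ne lam μ with rfl | hne
  · simp only [Finset.inter_self, if_true]
    exact card_covers lam
  · simp only [if_neg hne, Nat.add_zero]
    by_cases hcard : lam.card = μ.card
    · -- same size, distinct
      have hsub1 : covers μ ∩ covers lam ⊆ {μ ⊔ lam} := by
        intro ν hν
        rw [Finset.mem_inter, mem_covers, mem_covers] at hν
        obtain ⟨⟨h1, h2⟩, ⟨h3, h4⟩⟩ := hν
        have hle : μ ⊔ lam ≤ ν := sup_le h1 h3
        have hμlt : ¬ (μ ⊔ lam ≤ μ) := by
          intro hμ
          have : lam = μ := by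
            apply yd_eq_of_le_card (le_trans le_sup_right hμ); omega
          exact hne this
        have hgt : μ.card + 1 ≤ (μ ⊔ lam).card := by
          have hlee : μ ≤ μ ⊔ lam := le_sup_left
          have : μ.card ≤ (μ ⊔ lam).card := Finset.card_le_card (cells_subset_iff.mpr hlee)
          rcases eq_or_lt_of_le this with he | hl
          · exfalso
            exact hμlt (le_of_eq (yd_eq_of_le_card hlee (le_of_eq he.symm)).symm)
          · omega
        have : ν = μ ⊔ lam := (yd_eq_of_le_card hle (by omega)).symm
        simp [this]
      have hsub2 : cocovs μ ∩ cocovs lam ⊆ {μ ⊓ lam} := by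
        intro σ hσ
        rw [Finset.mem_inter, mem_cocovs, mem_cocovs] at hσ
        obtain ⟨⟨h1, h2⟩, ⟨h3, h4⟩⟩ := hσ
        have hle : σ ≤ μ ⊓ lam := le_inf h1 h3
        have hlt : ¬ (μ ≤ μ ⊓ lam) := by
          intro hμ
          have : μ = lam := by
            apply yd_eq_of_le_card (le_trans hμ inf_le_right) (by omega)
          exact hne this.symm
        have hcc : (μ ⊓ lam).card + 1 ≤ μ.card := by
          have hlee : μ ⊓ lam ≤ μ := inf_le_left
          have h5 : (μ ⊓ lam).card ≤ μ.card := Finset.card_le_card (cells_subset_iff.mpr hlee)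
          rcases eq_or_lt_of_le h5 with he | hl
          · exact absurd (le_of_eq (yd_eq_of_le_card hlee (le_of_eq he.symm)).symm) hlt
          · omega
        have : σ = μ ⊓ lam := yd_eq_of_le_card hle (by omega)
        simp [this]
      by_cases hkey : (μ ⊓ lam).card + 1 = μ.card
      · -- both singletons
        have hs := card_sup_inf μ lam
        have e1 : covers μ ∩ covers lam = {μ ⊔ lam} := by
          apply Finset.Subset.antisymm hsub1
          intro ν hν
          rw [Finset.mem_singleton] at hν
          subst hν
          rw [Finset.mem_inter, mem_covers, mem_covers]
          exact ⟨⟨le_sup_left, by omega⟩, ⟨le_sup_right, by omega⟩⟩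
        have e2 : cocovs μ ∩ cocovs lam = {μ ⊓ lam} := by
          apply Finset.Subset.antisymm hsub2
          intro σ hσ
          rw [Finset.mem_singleton] at hσ
          subst hσ
          rw [Finset.mem_inter, mem_cocovs, mem_cocovs]
          exact ⟨⟨inf_le_left, by omega⟩, ⟨inf_le_right, by omega⟩⟩
        rw [e1, e2, Finset.card_singleton, Finset.card_singleton]
      · -- both empty
        have hs := card_sup_inf μ lam
        have e1 : covers μ ∩ covers lam = ∅ := by
          rw [Finset.eq_empty_iff_forall_notMem]
          intro ν hν
          have hmem := hsub1 hν
          rw [Finset.mem_singleton] at hmem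
          rw [Finset.mem_inter, mem_covers, mem_covers] at hν
          rw [hmem] at hν
          omega
        have e2 : cocovs μ ∩ cocovs lam = ∅ := by
          rw [Finset.eq_empty_iff_forall_notMem]
          intro σ hσ
          have hmem := hsub2 hσ
          rw [Finset.mem_singleton] at hmem
          rw [Finset.mem_inter, mem_cocovs, mem_cocovs] at hσ
          rw [hmem] at hσ
          omega
        rw [e1, e2]
    · -- different sizes: both empty
      have e1 : covers μ ∩ covers lam = ∅ := by
        rw [Finset.eq_empty_iff_forall_notMem]
        intro ν hν
        rw [Finset.mem_inter, mem_covers, mem_covers] at hν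
        omega
      have e2 : cocovs μ ∩ cocovs lam = ∅ := by
        rw [Finset.eq_empty_iff_forall_notMem]
        intro σ hσ
        rw [Finset.mem_inter, mem_cocovs, mem_cocovs] at hσ
        omega
      rw [e1, e2]

end YD11

namespace YD11
open YoungDiagram

lemma filter_covers (α γ : YoungDiagram) :
    (covers α).filter (fun β => γ ∈ cocovs β) = covers α ∩ covers γ := by
  ext β
  simp only [Finset.mem_filter, Finset.mem_inter, mem_cocovs_iff_mem_covers]

lemma filter_cocovs (α β : YoungDiagram) :
    (cocovs α).filter (fun γ => β ∈ covers γ) = cocovs α ∩ cocovs β := by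
  ext γ
  simp only [Finset.mem_filter, Finset.mem_inter, ← mem_cocovs_iff_mem_covers]

lemma sum_expand {W : Finset YoungDiagram} {s : Finset YoungDiagram} (hs : s ⊆ W)
    (f : YoungDiagram → ℕ) : ∑ γ ∈ s, f γ = ∑ γ ∈ W, if γ ∈ s then f γ else 0 := by
  rw [Finset.sum_ite_mem]
  congr 1
  rw [Finset.inter_eq_right.mpr hs]

set_option maxHeartbeats 1000000 in
lemma key_exchange (α : YoungDiagram) (f : YoungDiagram → ℕ) :
    ∑ β ∈ covers α, ∑ γ ∈ cocovs β, f γ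
      = (∑ γ ∈ cocovs α, ∑ β ∈ covers γ, f β) + f α := by
  classical
  set W : Finset YoungDiagram :=
    ((covers α).biUnion cocovs ∪ (cocovs α).biUnion covers) ∪ {α} with hW
  have hαW : α ∈ W := by simp [hW]
  have hW1 : ∀ β ∈ covers α, cocovs β ⊆ W := by
    intro β hβ γ hγ
    simp only [hW, Finset.mem_union, Finset.mem_biUnion]
    exact Or.inl (Or.inl ⟨β, hβ, hγ⟩)
  have hW2 : ∀ γ ∈ cocovs α, covers γ ⊆ W := by
    intro γ hγ β hβ
    simp only [hW, Finset.mem_union, Finset.mem_biUnion]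
    exact Or.inl (Or.inr ⟨γ, hγ, hβ⟩)
  have hL : ∑ β ∈ covers α, ∑ γ ∈ cocovs β, f γ
      = ∑ γ ∈ W, (covers α ∩ covers γ).card * f γ := by
    have : ∀ β ∈ covers α, ∑ γ ∈ cocovs β, f γ = ∑ γ ∈ W, if γ ∈ cocovs β then f γ else 0 :=
      fun β hβ => sum_expand (hW1 β hβ) f
    rw [Finset.sum_congr rfl this, Finset.sum_comm]
    apply Finset.sum_congr rfl
    intro γ _
    rw [← Finset.sum_filter, filter_covers, Finset.sum_const, smul_eq_mul]
  have hR : ∑ γ ∈ cocovs α, ∑ β ∈ covers γ, f β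
      = ∑ γ ∈ W, (cocovs α ∩ cocovs γ).card * f γ := by
    have : ∀ γ ∈ cocovs α, ∑ β ∈ covers γ, f β = ∑ β ∈ W, if β ∈ covers γ then f β else 0 :=
      fun γ hγ => sum_expand (hW2 γ hγ) f
    rw [Finset.sum_congr rfl this, Finset.sum_comm]
    apply Finset.sum_congr rfl
    intro β _
    rw [← Finset.sum_filter, filter_cocovs, Finset.sum_const, smul_eq_mul]
  rw [hL, hR]
  have hterm : ∀ γ ∈ W, (covers α ∩ covers γ).card * f γ
      = (cocovs α ∩ cocovs γ).card * f γ + (if γ = α then f γ else 0) := by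
    intro γ _
    rw [diamond α γ, add_mul]
    congr 1
    split_ifs <;> simp
  rw [Finset.sum_congr rfl hterm, Finset.sum_add_distrib, Finset.sum_ite_eq' W α f, if_pos hαW]

end YD11

namespace YD11
open YoungDiagram

/-- saturated chain condition -/
def IsChn {n : ℕ} (f : Fin (n+1) → YoungDiagram) : Prop :=
  ∀ i : Fin n, f i.castSucc ≤ f i.succ ∧ (f i.succ).card = (f i.castSucc).card + 1

/-- type of saturated chains of length `n` starting at `α` -/
def ChainT (n : ℕ) (α : YoungDiagram) := {f : Fin (n+1) → YoungDiagram // f 0 = α ∧ IsChn f}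

noncomputable def E (n : ℕ) (α : YoungDiagram) : ℕ := Nat.card (ChainT n α)

lemma chain_card {n : ℕ} {f : Fin (n+1) → YoungDiagram} (hf : IsChn f) :
    ∀ m (h : m < n + 1), (f ⟨m, h⟩).card = (f 0).card + m := by
  intro m
  induction m with
  | zero => intro h; rfl
  | succ m ih =>
    intro h
    have hm : m < n := by omega
    have hstep := (hf ⟨m, hm⟩).2
    have e1 : (⟨m, hm⟩ : Fin n).succ = ⟨m + 1, h⟩ := rfl
    have e2 : (⟨m, hm⟩ : Fin n).castSucc = ⟨m, by omega⟩ := rfl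
    rw [e1, e2] at hstep
    rw [hstep, ih (by omega)]
    ring

lemma cell_lt_card {μ : YoungDiagram} {c : ℕ × ℕ} (hc : c ∈ μ) :
    c.1 < μ.card ∧ c.2 < μ.card := by
  obtain ⟨i, j⟩ := c
  constructor
  · have h1 : i < μ.colLen j := mem_iff_lt_colLen.mp hc
    have h2 : μ.colLen j = (μ.col j).card := μ.colLen_eq_card
    have h3 : (μ.col j).card ≤ μ.cells.card := Finset.card_filter_le _ _
    show i < μ.cells.card
    omega
  · have h1 : j < μ.rowLen i := mem_iff_lt_rowLen.mp hc
    have h2 : μ.rowLen i = (μ.row i).card := μ.rowLen_eq_card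
    have h3 : (μ.row i).card ≤ μ.cells.card := Finset.card_filter_le _ _
    show j < μ.cells.card
    omega

instance chainT_finite (n : ℕ) (α : YoungDiagram) : Finite (ChainT n α) := by
  set m := α.card + n + 1 with hm
  apply Finite.of_injective
    (f := fun (f : ChainT n α) (i : Fin (n+1)) =>
      {p : Fin m × Fin m | ((p.1 : ℕ), (p.2 : ℕ)) ∈ f.1 i})
  intro f g hfg
  have hbound : ∀ (f : ChainT n α) (i : Fin (n+1)), (f.1 i).card < m := by
    intro f i
    have h1 : (f.1 i).card = (f.1 0).card + i.1 := by
      have := chain_card f.2.2 i.1 i.2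
      simpa [Fin.eta] using this
    rw [f.2.1] at h1
    omega
  have hfg' : ∀ i (p : Fin m × Fin m),
      (((p.1 : ℕ), (p.2 : ℕ)) ∈ f.1 i) ↔ (((p.1 : ℕ), (p.2 : ℕ)) ∈ g.1 i) := by
    intro i p
    exact Set.ext_iff.mp (congrFun hfg i) p
  apply Subtype.ext
  funext i
  apply YoungDiagram.ext
  ext c
  simp only [mem_cells]
  constructor
  · intro hc
    have hb := cell_lt_card hc
    have h1 : c.1 < m := lt_trans hb.1 (hbound f i)
    have h2 : c.2 < m := lt_trans hb.2 (hbound f i)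
    have h3 := (hfg' i (⟨c.1, h1⟩, ⟨c.2, h2⟩)).mp (by rwa [Prod.mk.eta])
    rwa [Prod.mk.eta] at h3
  · intro hc
    have hb := cell_lt_card hc
    have h1 : c.1 < m := lt_trans hb.1 (hbound g i)
    have h2 : c.2 < m := lt_trans hb.2 (hbound g i)
    have h3 := (hfg' i (⟨c.1, h1⟩, ⟨c.2, h2⟩)).mpr (by rwa [Prod.mk.eta])
    rwa [Prod.mk.eta] at h3

lemma E_zero (α : YoungDiagram) : E 0 α = 1 := by
  rw [E, Nat.card_eq_one_iff_unique]
  constructor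
  · constructor
    intro f g
    apply Subtype.ext
    funext i
    have : i = 0 := Fin.eq_of_val_eq (by omega)
    rw [this, f.2.1, g.2.1]
  · exact ⟨⟨fun _ => α, rfl, fun i => i.elim0⟩⟩

end YD11

namespace YD11
open YoungDiagram

lemma chain_tail {n : ℕ} {f : Fin (n+2) → YoungDiagram} (hf : IsChn f) :
    IsChn (fun j : Fin (n+1) => f j.succ) := by
  intro j
  have h := hf j.succ
  rwa [← Fin.succ_castSucc] at h

noncomputable def chainEquiv (n : ℕ) (α : YoungDiagram) :
    ChainT (n+1) α ≃ Σ β : {β // β ∈ covers α}, ChainT n β.1 where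
  toFun f := ⟨⟨f.1 1, by
      rw [mem_covers]
      have h0 := f.2.2 0
      rw [Fin.castSucc_zero, Fin.succ_zero_eq_one, f.2.1] at h0
      exact h0⟩,
    ⟨fun j => f.1 j.succ, congrArg f.1 Fin.succ_zero_eq_one, chain_tail f.2.2⟩⟩
  invFun p := ⟨Fin.cons α p.2.1, Fin.cons_zero _ _, by
    intro i
    refine Fin.cases ?_ ?_ i
    · have e0 : Fin.cons (α := fun _ => YoungDiagram) α p.2.1 (Fin.castSucc 0) = α := by
        rw [Fin.castSucc_zero, Fin.cons_zero]
      have e1 : Fin.cons (α := fun _ => YoungDiagram) α p.2.1 (Fin.succ 0) = p.1.1 := by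
        rw [Fin.cons_succ, p.2.2.1]
      show Fin.cons (α := fun _ => YoungDiagram) α p.2.1 (Fin.castSucc 0) ≤
          Fin.cons (α := fun _ => YoungDiagram) α p.2.1 (Fin.succ 0) ∧
        (Fin.cons (α := fun _ => YoungDiagram) α p.2.1 (Fin.succ 0)).card =
          (Fin.cons (α := fun _ => YoungDiagram) α p.2.1 (Fin.castSucc 0)).card + 1
      rw [e0, e1]
      exact mem_covers.mp p.1.2
    · intro j
      have e0 : Fin.cons (α := fun _ => YoungDiagram) α p.2.1 j.succ.castSucc
          = p.2.1 j.castSucc := by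
        rw [← Fin.succ_castSucc, Fin.cons_succ]
      have e1 : Fin.cons (α := fun _ => YoungDiagram) α p.2.1 j.succ.succ = p.2.1 j.succ := by
        rw [Fin.cons_succ]
      show Fin.cons (α := fun _ => YoungDiagram) α p.2.1 j.succ.castSucc ≤
          Fin.cons (α := fun _ => YoungDiagram) α p.2.1 j.succ.succ ∧
        (Fin.cons (α := fun _ => YoungDiagram) α p.2.1 j.succ.succ).card =
          (Fin.cons (α := fun _ => YoungDiagram) α p.2.1 j.succ.castSucc).card + 1
      rw [e0, e1]
      exact p.2.2.2 j⟩
  left_inv f := by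
    apply Subtype.ext
    funext i
    refine Fin.cases ?_ ?_ i
    · show Fin.cons (α := fun _ => YoungDiagram) α (fun j => f.1 j.succ) 0 = f.1 0
      rw [Fin.cons_zero, f.2.1]
    · intro j
      show Fin.cons (α := fun _ => YoungDiagram) α (fun j => f.1 j.succ) j.succ = f.1 j.succ
      rw [Fin.cons_succ]
  right_inv p := by
    obtain ⟨⟨β, hβ⟩, g, hg0, hgc⟩ := p
    have h1 : Fin.cons (α := fun _ => YoungDiagram) α g 1 = β := by
      rw [← Fin.succ_zero_eq_one, Fin.cons_succ, hg0]
    refine Sigma.ext (Subtype.ext h1) ?_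
    have hpred : ∀ x : Fin (n+1) → YoungDiagram,
        (x 0 = Fin.cons (α := fun _ => YoungDiagram) α g 1 ∧ IsChn x) ↔ (x 0 = β ∧ IsChn x) := by
      intro x
      rw [h1]
    refine (Subtype.heq_iff_coe_eq hpred).mpr ?_
    funext j
    show Fin.cons (α := fun _ => YoungDiagram) α g j.succ = g j
    rw [Fin.cons_succ]

lemma E_succ (n : ℕ) (α : YoungDiagram) : E (n+1) α = ∑ β ∈ covers α, E n β := by
  classical
  have e := Nat.card_congr (chainEquiv n α)
  letI : ∀ β : {β // β ∈ covers α}, Fintype (ChainT n β.1) := fun β => Fintype.ofFinite _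
  rw [E, e, Nat.card_eq_fintype_card, Fintype.card_sigma]
  rw [← Finset.sum_attach (covers α) (fun β => E n β)]
  apply Finset.sum_congr rfl
  intro β _
  rw [E, Nat.card_eq_fintype_card]

end YD11

namespace YD11
open YoungDiagram

lemma mem_rowYD {k : ℕ} {c : ℕ × ℕ} : c ∈ rowYD k ↔ c.1 = 0 ∧ c.2 < k := by
  rw [rowYD, mem_ofRowLens]
  constructor
  · rintro ⟨h1, h2⟩
    simp only [List.length_singleton] at h1
    interval_cases h : c.1
    · simpa using h2
  · rintro ⟨h1, h2⟩
    refine ⟨by simp [h1], by simpa [h1] using h2⟩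

lemma card_rowYD (k : ℕ) : (rowYD k).card = k := by
  show (rowYD k).cells.card = k
  have : (rowYD k).cells = {0} ×ˢ Finset.range k := by
    ext c
    simp only [Finset.mem_product, Finset.mem_singleton, Finset.mem_range, mem_cells]
    exact mem_rowYD
  rw [this, Finset.card_product]
  simp

lemma eq_rowYD_of_le {ν : YoungDiagram} {k : ℕ} (h : ν ≤ rowYD k) : ν = rowYD ν.card := by
  have hrow : ∀ c : ℕ × ℕ, c ∈ ν → c.1 = 0 := by
    intro c hc
    exact (mem_rowYD.mp (h hc)).1
  have hcells : ν.cells = {0} ×ˢ Finset.range (ν.rowLen 0) := by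
    ext c
    simp only [Finset.mem_product, Finset.mem_singleton, Finset.mem_range, mem_cells]
    constructor
    · intro hc
      refine ⟨hrow c hc, ?_⟩
      have : ((0:ℕ), c.2) ∈ ν := by
        rw [← hrow c hc]
        simpa using hc
      exact mem_iff_lt_rowLen.mp this
    · rintro ⟨h1, h2⟩
      have : ((0:ℕ), c.2) ∈ ν := mem_iff_lt_rowLen.mpr h2
      rwa [show ((0:ℕ), c.2) = c from Prod.ext h1.symm rfl] at this
  have hcard : ν.card = ν.rowLen 0 := by
    show ν.cells.card = _
    rw [hcells, Finset.card_product]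
    simp
  apply YoungDiagram.ext
  rw [hcells, hcard]
  ext c
  simp only [Finset.mem_product, Finset.mem_singleton, Finset.mem_range, mem_cells]
  exact mem_rowYD.symm

lemma rowYD_le_succ (k : ℕ) : rowYD k ≤ rowYD (k+1) := by
  rw [← YoungDiagram.cells_subset_iff]
  intro c hc
  rw [mem_cells, mem_rowYD] at hc ⊢
  omega

lemma cocovs_rowYD_succ (k : ℕ) : cocovs (rowYD (k+1)) = {rowYD k} := by
  ext ν
  rw [mem_cocovs, Finset.mem_singleton]
  constructor
  · rintro ⟨hle, hcard⟩
    have := eq_rowYD_of_le hle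
    rw [card_rowYD] at hcard
    have hν : ν.card = k := by omega
    rw [hν] at this
    exact this
  · rintro rfl
    exact ⟨rowYD_le_succ k, by rw [card_rowYD, card_rowYD]⟩

lemma cocovs_rowYD_zero : cocovs (rowYD 0) = ∅ := by
  rw [Finset.eq_empty_iff_forall_notMem]
  intro ν hν
  rw [mem_cocovs, card_rowYD] at hν
  omega

end YD11

namespace YD11
open YoungDiagram

lemma claim : ∀ n, ∀ α : YoungDiagram,
    E (n+1) α = (∑ γ ∈ cocovs α, E n γ) + n * E (n-1) α + E n α := by
  intro n
  induction n with
  | zero =>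
    intro α
    rw [E_succ]
    simp only [E_zero, Finset.sum_const, smul_eq_mul, mul_one]
    rw [card_covers]
    omega
  | succ n ih =>
    intro α
    rw [E_succ]
    have hterm : ∀ β ∈ covers α,
        E (n+1) β = (∑ γ ∈ cocovs β, E n γ) + n * E (n-1) β + E n β := fun β _ => ih β
    rw [Finset.sum_congr rfl hterm]
    rw [Finset.sum_add_distrib, Finset.sum_add_distrib]
    rw [key_exchange α (E n)]
    have h1 : ∑ β ∈ covers α, n * E (n-1) β = n * E ((n-1)+1) α := by
      rw [← Finset.mul_sum, ← E_succ]
    have h2 : ∑ β ∈ covers α, E n β = E (n+1) α := (E_succ n α).symm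
    have h3 : ∀ γ, ∑ β ∈ covers γ, E n β = E (n+1) γ := fun γ => (E_succ n γ).symm
    rw [h1, h2, Finset.sum_congr rfl (fun γ _ => h3 γ)]
    have h4 : n * E ((n-1)+1) α = n * E n α := by
      cases n with
      | zero => simp
      | succ m => rfl
    rw [h4]
    have h5 : n + 1 - 1 = n := rfl
    rw [h5]
    ring

/-- the chain-count function specialized at single rows -/
noncomputable def G (n k : ℕ) : ℕ := E n (rowYD k)

lemma G_zero (k : ℕ) : G 0 k = 1 := E_zero _

lemma G_succ_zero (n : ℕ) : G (n+1) 0 = n * G (n-1) 0 + G n 0 := by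
  rw [G, claim n (rowYD 0), cocovs_rowYD_zero]
  simp [G]

lemma G_succ_succ (n k : ℕ) :
    G (n+1) (k+1) = G n k + n * G (n-1) (k+1) + G n (k+1) := by
  rw [G, claim n (rowYD (k+1)), cocovs_rowYD_succ]
  simp only [Finset.sum_singleton]
  rfl

end YD11

namespace YD11
open YoungDiagram

def SkewT (n : ℕ) (alp lam : YoungDiagram) :=
  {f : Fin (n+1) → YoungDiagram // f 0 = alp ∧ f (Fin.last n) = lam ∧ IsChn f}

lemma skewSYT_eq {lam alp : YoungDiagram} {n : ℕ} (h : lam.card = n + alp.card) :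
    skewSYT lam alp = Nat.card (SkewT n alp lam) := by
  have hn : lam.card - alp.card = n := by omega
  subst hn
  rfl

def skewToChain {n : ℕ} {alp lam : YoungDiagram} (f : SkewT n alp lam) : ChainT n alp :=
  ⟨f.1, f.2.1, f.2.2.2⟩

instance skewT_finite (n : ℕ) (alp lam : YoungDiagram) : Finite (SkewT n alp lam) := by
  haveI := chainT_finite n alp
  apply Finite.of_injective (skewToChain (n := n) (alp := alp) (lam := lam))
  intro f g h
  have h2 : f.1 = g.1 := congrArg (fun x : ChainT n alp => x.1) h
  exact Subtype.ext h2

lemma yd_inj_box {m : ℕ} {μ ν : YoungDiagram} (hμ : μ.card < m) (hν : ν.card < m)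
    (h : {p : Fin m × Fin m | ((p.1 : ℕ), (p.2 : ℕ)) ∈ μ}
       = {p : Fin m × Fin m | ((p.1 : ℕ), (p.2 : ℕ)) ∈ ν}) : μ = ν := by
  have h' : ∀ p : Fin m × Fin m, (((p.1 : ℕ), (p.2 : ℕ)) ∈ μ) ↔ (((p.1 : ℕ), (p.2 : ℕ)) ∈ ν) :=
    fun p => Set.ext_iff.mp h p
  apply YoungDiagram.ext
  ext c
  simp only [mem_cells]
  constructor
  · intro hc
    have hb := cell_lt_card hc
    have h1 : c.1 < m := by omega
    have h2 : c.2 < m := by omega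
    have h3 := (h' (⟨c.1, h1⟩, ⟨c.2, h2⟩)).mp (by rwa [Prod.mk.eta])
    rwa [Prod.mk.eta] at h3
  · intro hc
    have hb := cell_lt_card hc
    have h1 : c.1 < m := by omega
    have h2 : c.2 < m := by omega
    have h3 := (h' (⟨c.1, h1⟩, ⟨c.2, h2⟩)).mpr (by rwa [Prod.mk.eta])
    rwa [Prod.mk.eta] at h3

lemma finite_card_set (m : ℕ) : {μ : YoungDiagram | μ.card = m}.Finite := by
  apply Set.Finite.of_finite_image (f := fun μ =>
    {p : Fin (m+1) × Fin (m+1) | ((p.1 : ℕ), (p.2 : ℕ)) ∈ μ})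
  · exact Set.toFinite _
  · intro μ hμ ν hν h
    exact yd_inj_box (by simp only [Set.mem_setOf_eq] at hμ; omega)
      (by simp only [Set.mem_setOf_eq] at hν; omega) h

lemma chain_last_card {n : ℕ} {α : YoungDiagram} (f : ChainT n α) :
    (f.1 (Fin.last n)).card = n + α.card := by
  have := chain_card f.2.2 n (by omega)
  rw [show (⟨n, by omega⟩ : Fin (n+1)) = Fin.last n from rfl] at this
  rw [this, f.2.1]
  omega

noncomputable def chainSigmaEquiv (n : ℕ) (α : YoungDiagram) (T : Finset YoungDiagram)
    (hT : ∀ lam, lam ∈ T ↔ lam.card = n + α.card) :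
    ChainT n α ≃ Σ lam : {x // x ∈ T}, SkewT n α lam.1 where
  toFun f := ⟨⟨f.1 (Fin.last n), (hT _).mpr (chain_last_card f)⟩, ⟨f.1, f.2.1, rfl, f.2.2⟩⟩
  invFun p := ⟨p.2.1, p.2.2.1, p.2.2.2.2⟩
  left_inv f := rfl
  right_inv p := by
    obtain ⟨⟨lam, hlam⟩, g, hg0, hgl, hgc⟩ := p
    refine Sigma.ext (Subtype.ext hgl) ?_
    have hpred : ∀ x : Fin (n+1) → YoungDiagram,
        (x 0 = α ∧ x (Fin.last n) = g (Fin.last n) ∧ IsChn x) ↔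
        (x 0 = α ∧ x (Fin.last n) = lam ∧ IsChn x) := by
      intro x
      rw [hgl]
    exact (Subtype.heq_iff_coe_eq hpred).mpr rfl

lemma NN_eq_E (n k : ℕ) : NN (n + k) (rowYD k) = E n (rowYD k) := by
  classical
  have hfin := finite_card_set (n + k)
  rw [NN, ← hfin.coe_toFinset, finsum_mem_coe_finset]
  have hT : ∀ lam, lam ∈ hfin.toFinset ↔ lam.card = n + (rowYD k).card := by
    intro lam
    rw [Set.Finite.mem_toFinset, Set.mem_setOf_eq, card_rowYD]
  have hterm : ∀ lam ∈ hfin.toFinset,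
      skewSYT lam (rowYD k) = Nat.card (SkewT n (rowYD k) lam) := by
    intro lam hlam
    exact skewSYT_eq (by rw [(hT lam).mp hlam, card_rowYD])
  rw [Finset.sum_congr rfl hterm]
  have e := Nat.card_congr (chainSigmaEquiv n (rowYD k) hfin.toFinset hT)
  letI : ∀ lam : {x // x ∈ hfin.toFinset}, Fintype (SkewT n (rowYD k) lam.1) :=
    fun lam => Fintype.ofFinite _
  rw [E, e, Nat.card_eq_fintype_card, Fintype.card_sigma]
  rw [← Finset.sum_attach hfin.toFinset (fun lam => Nat.card (SkewT n (rowYD k) lam))]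
  apply Finset.sum_congr rfl
  intro lam _
  rw [Nat.card_eq_fintype_card]

end YD11

namespace YD11
open YoungDiagram PowerSeries

noncomputable def TQ (m : ℕ) : ℚ := (G m 0 : ℚ)

lemma TQ_zero : TQ 0 = 1 := by rw [TQ, G_zero]; norm_num

lemma TQ_one : TQ 1 = 1 := by
  rw [TQ, G_succ_zero 0, G_zero]
  norm_num

lemma TQ_rec (m : ℕ) : TQ (m+2) = TQ (m+1) + (m+1 : ℚ) * TQ m := by
  rw [TQ, TQ, TQ, G_succ_zero (m+1)]
  push_cast [Nat.add_sub_cancel]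
  ring

noncomputable def B (n : ℕ) : Polynomial ℚ :=
  ∑ j ∈ range (n+1), Polynomial.C ((n.choose j : ℚ) * TQ (n-j)) * Polynomial.X ^ j

lemma coeffB (n j : ℕ) : (B n).coeff j = (n.choose j : ℚ) * TQ (n - j) := by
  rw [B, Polynomial.finset_sum_coeff]
  simp only [Polynomial.coeff_C_mul, Polynomial.coeff_X_pow]
  rw [Finset.sum_eq_single j]
  · simp
  · intro b _ hb
    simp [Ne.symm hb]
  · intro hj
    rw [Finset.mem_range] at hj
    have : n.choose j = 0 := Nat.choose_eq_zero_of_lt (by omega)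
    simp [this]

lemma B_zero : B 0 = 1 := by
  apply Polynomial.ext
  intro j
  rw [coeffB]
  cases j with
  | zero => simp [TQ_zero]
  | succ m => simp [Polynomial.coeff_one]

lemma B_one : B 1 = 1 + Polynomial.X := by
  apply Polynomial.ext
  intro j
  rw [coeffB, Polynomial.coeff_add, Polynomial.coeff_one, Polynomial.coeff_X]
  match j with
  | 0 => simp [TQ_one]
  | 1 => simp [TQ_zero]
  | (m+2) => simp [Nat.choose_eq_zero_of_lt]

lemma choose_absorb {n j : ℕ} (hj : j ≤ n) :
    ((n:ℚ)+1) * (n.choose (j+1) : ℚ) = ((n:ℚ) - (j:ℚ)) * ((n+1).choose (j+1) : ℚ) := by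
  have h := Nat.choose_mul_succ_eq n (j+1)
  have h2 := congrArg (fun x : ℕ => (x : ℚ)) h
  simp only [Nat.cast_mul] at h2
  rw [Nat.cast_sub (by omega)] at h2
  push_cast at h2
  linarith

lemma TQ_step (a : ℕ) : TQ (a+1) = TQ a + (a:ℚ) * TQ (a-1) := by
  cases a with
  | zero => rw [TQ_one, TQ_zero]; norm_num
  | succ m => rw [TQ_rec]; push_cast [Nat.add_sub_cancel]; ring

lemma Brec (n : ℕ) : B (n+2) = (1 + Polynomial.X) * B (n+1) + ((n:ℚ)+1) • B n := by
  apply Polynomial.ext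
  intro j
  cases j with
  | zero =>
    simp only [add_mul, one_mul, Polynomial.coeff_add, Polynomial.mul_coeff_zero,
      Polynomial.coeff_X_zero, Polynomial.coeff_smul, smul_eq_mul, coeffB, zero_mul,
      Nat.choose_zero_right, Nat.cast_one, Nat.sub_zero, one_mul, add_zero]
    rw [TQ_rec]
    ring
  | succ i =>
    simp only [add_mul, one_mul, Polynomial.coeff_add, Polynomial.coeff_X_mul,
      Polynomial.coeff_smul, smul_eq_mul, coeffB]
    have e1 : n + 2 - (i+1) = (n - i) + 1 ∨ i > n := by omega
    by_cases hi : i ≤ n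
    · have e1 : n + 2 - (i+1) = (n - i) + 1 := by omega
      have e2 : n + 1 - (i+1) = n - i := by omega
      have e3 : n + 1 - i = (n - i) + 1 := by omega
      have e4 : n - (i + 1) = (n - i) - 1 := by omega
      have pascal : ((n+2).choose (i+1) : ℚ) = ((n+1).choose i : ℚ) + ((n+1).choose (i+1) : ℚ) := by
        rw [show n + 2 = (n+1) + 1 from rfl, Nat.choose_succ_succ (n+1) i]
        push_cast; ring
      have e5 : ((n - i : ℕ) : ℚ) = (n : ℚ) - (i : ℚ) := Nat.cast_sub hi
      have habs := choose_absorb (n := n) (j := i) hi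
      rw [e1, e2, e3, e4, pascal, TQ_step (n - i), e5]
      linear_combination (-TQ (n - i - 1)) * habs
    · by_cases hi2 : i = n + 1
      · subst hi2
        have z1 : (n+1).choose (n+1+1) = 0 := Nat.choose_eq_zero_of_lt (by omega)
        have z2 : n.choose (n+1+1) = 0 := Nat.choose_eq_zero_of_lt (by omega)
        have z3 : (n+2).choose (n+1+1) = 1 := Nat.choose_self _
        have z4 : (n+1).choose (n+1) = 1 := Nat.choose_self _
        rw [z1, z2, z3, z4]
        norm_num
      · have z1 : (n+2).choose (i+1) = 0 := Nat.choose_eq_zero_of_lt (by omega)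
        have z2 : (n+1).choose (i+1) = 0 := Nat.choose_eq_zero_of_lt (by omega)
        have z3 : (n+1).choose i = 0 := Nat.choose_eq_zero_of_lt (by omega)
        have z4 : n.choose (i+1) = 0 := Nat.choose_eq_zero_of_lt (by omega)
        rw [z1, z2, z3, z4]
        norm_num

lemma Bder (n : ℕ) : Polynomial.derivative (B (n+1)) = ((n:ℚ)+1) • B n := by
  apply Polynomial.ext
  intro j
  rw [Polynomial.coeff_derivative, Polynomial.coeff_smul, coeffB, coeffB, smul_eq_mul]
  have e1 : n + 1 - (j+1) = n - j := by omega
  rw [e1]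
  have h := Nat.add_one_mul_choose_eq n j
  have h2 := congrArg (fun x : ℕ => (x : ℚ)) h
  push_cast at h2
  linear_combination (-TQ (n - j)) * h2

end YD11

namespace YD11
open YoungDiagram

noncomputable def P (n : ℕ) : PowerSeries ℚ := PowerSeries.mk fun k => (G n k : ℚ)

lemma coeff_zero_P (n : ℕ) : PowerSeries.coeff 0 (P n) = (G n 0 : ℚ) := by
  rw [P, PowerSeries.coeff_mk]

lemma coeff_succ_P (n k : ℕ) : PowerSeries.coeff (k+1) (P n) = (G n (k+1) : ℚ) := by
  rw [P, PowerSeries.coeff_mk]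

lemma coeff_zero_X_mul (f : PowerSeries ℚ) :
    PowerSeries.coeff 0 (PowerSeries.X * f) = 0 := by
  rw [PowerSeries.coeff_zero_eq_constantCoeff, map_mul]
  simp

lemma Prec0 : P 1 = (1 + PowerSeries.X) * P 0 := by
  ext k
  rw [add_mul, one_mul, map_add]
  cases k with
  | zero =>
    rw [coeff_zero_X_mul, add_zero, coeff_zero_P, coeff_zero_P, G_succ_zero 0]
    norm_num
  | succ k =>
    rw [PowerSeries.coeff_succ_X_mul, coeff_succ_P, coeff_succ_P]
    cases k with
    | zero =>
      rw [coeff_zero_P, G_succ_succ 0 0]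
      push_cast
      ring
    | succ m =>
      rw [coeff_succ_P, G_succ_succ 0 (m+1)]
      push_cast
      ring

lemma PrecS (n : ℕ) : P (n+2) = (1 + PowerSeries.X) * P (n+1) + ((n:ℚ)+1) • P n := by
  ext k
  rw [map_add, add_mul, one_mul, map_add, PowerSeries.coeff_smul, smul_eq_mul]
  cases k with
  | zero =>
    rw [coeff_zero_X_mul, add_zero, coeff_zero_P, coeff_zero_P, coeff_zero_P, G_succ_zero (n+1)]
    push_cast [Nat.add_sub_cancel]
    ring
  | succ k =>
    rw [PowerSeries.coeff_succ_X_mul, coeff_succ_P, coeff_succ_P, coeff_succ_P]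
    have h := G_succ_succ (n+1) k
    rw [Nat.add_sub_cancel] at h
    cases k with
    | zero =>
      rw [coeff_zero_P, h]
      push_cast
      ring
    | succ m =>
      rw [coeff_succ_P, h]
      push_cast
      ring

lemma P_zero_mul : P 0 * (1 - PowerSeries.X) = 1 := by
  have h : P 0 * (1 - PowerSeries.X) = P 0 - P 0 * PowerSeries.X := by ring
  rw [h]
  ext k
  rw [map_sub]
  cases k with
  | zero =>
    rw [PowerSeries.coeff_zero_eq_constantCoeff, map_mul]
    simp [P, G_zero]
  | succ k =>
    rw [PowerSeries.coeff_succ_mul_X, coeff_succ_P]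
    cases k with
    | zero => rw [coeff_zero_P]; simp [G_zero, PowerSeries.coeff_one]
    | succ m => rw [coeff_succ_P]; simp [G_zero, PowerSeries.coeff_one]

lemma Pstmt : ∀ n, P n * (1 - PowerSeries.X) = ((B n : Polynomial ℚ) : PowerSeries ℚ) := by
  have key : ∀ n, P n * (1 - PowerSeries.X) = ((B n : Polynomial ℚ) : PowerSeries ℚ)
      ∧ P (n+1) * (1 - PowerSeries.X) = ((B (n+1) : Polynomial ℚ) : PowerSeries ℚ) := by
    intro n
    induction n with
    | zero =>
      constructor
      · rw [P_zero_mul, B_zero, Polynomial.coe_one]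
      · rw [Prec0, mul_assoc, P_zero_mul, mul_one, B_one, Polynomial.coe_add,
          Polynomial.coe_one, Polynomial.coe_X]
    | succ m ih =>
      refine ⟨ih.2, ?_⟩
      rw [PrecS m, add_mul, mul_assoc, ih.2, smul_mul_assoc, ih.1, Brec m]
      rw [Polynomial.smul_eq_C_mul, PowerSeries.smul_eq_C_mul]
      simp only [Polynomial.coe_add, Polynomial.coe_mul, Polynomial.coe_one,
        Polynomial.coe_X, Polynomial.coe_C]
  exact fun n => (key n).1

lemma Apoly_eq : ∀ n, Apoly n = B n := by
  intro n
  induction n with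
  | zero => rw [Apoly, B_zero]
  | succ m ih =>
    rw [Apoly, ih]
    cases m with
    | zero =>
      rw [B_zero, B_one]
      simp
      ring
    | succ l =>
      rw [Bder l, Brec l]
      ring

end YD11


/-- `Σ_{k≥0} N(n+k;(k)) x^k = A_n(x)/(1−x)` as formal power series, where `A_0 = 1` and
`A_{n+1} = A_n' + (x+1)A_n`. -/
theorem stmt11 (n : ℕ) :
    (PowerSeries.mk fun k => (NN (n + k) (rowYD k) : ℚ)) * (1 - PowerSeries.X)
      = (Apoly n : PowerSeries ℚ) := by
  have h1 : (PowerSeries.mk fun k => (NN (n + k) (rowYD k) : ℚ)) = YD11.P n := by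
    apply PowerSeries.ext
    intro k
    rw [PowerSeries.coeff_mk, YD11.P, PowerSeries.coeff_mk, YD11.NN_eq_E]
    rfl
  rw [h1, YD11.Pstmt, YD11.Apoly_eq]
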